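/- Let e be an execution over finite sets P of processes and Msg of messages, and let M = msc(e). Then e belongs to the peer-to-peer communication model p2p if and only if for any two send events s1, s2 of e both labelled with a send from a process p to a process q such that s1 ≺_M s2, one of the following holds: s2 is unmatched, or there exist receive events r1, r2 with r1 ≺_M r2, src(r1) = s1 and src(r2) = s2. -/

import Mathlib

/-! ## Common definitions: actions, executions, MSCs, communication models,
communicating finite state machines, and global types. -/

/-- Actions: a send `p▷q!m` or a receive `p▷q?m`. -/
inductive Act (P M : Type) : Type where
  | snd (p q : P) (m : M)
  | rcv (p q : P) (m : M)
deriving DecidableEq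

namespace Act
variable {P M : Type}

/-- The process executing an action: a send belongs to the sender,
a receive belongs to the receiver. -/
def proc : Act P M → P
  | .snd p _ _ => p
  | .rcv _ q _ => q

end Act

/-- Raw executions: a word of actions together with a source function on positions. -/
structure Exec (P M : Type) : Type where
  w : List (Act P M)
  src : ℕ → ℕ

namespace Exec
variable {P M : Type}

def act? (e : Exec P M) (i : ℕ) : Option (Act P M) := e.w[i]?

def IsSend (e : Exec P M) (i : ℕ) : Prop := ∃ p q m, e.act? i = some (.snd p q m)

def IsRecv (e : Exec P M) (i : ℕ) : Prop := ∃ p q m, e.act? i = some (.rcv p q m)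

/-- Well-formedness of an execution: each receive event `r` labelled `p▷q?m` has a
source send event `src r < r` labelled `p▷q!m`, and `src` is injective on receive events. -/
def WF (e : Exec P M) : Prop :=
  (∀ i p q m, e.act? i = some (.rcv p q m) →
    e.src i < i ∧ e.act? (e.src i) = some (.snd p q m)) ∧
  (∀ i j, e.IsRecv i → e.IsRecv j → e.src i = e.src j → i = j)

/-- A send event is matched if it is the source of some receive event. -/
def Matched (e : Exec P M) (s : ℕ) : Prop := ∃ r, e.IsRecv r ∧ e.src r = s

def OrphanFree (e : Exec P M) : Prop := ∀ s, e.IsSend s → e.Matched s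

/-- Prefix of executions: the word is a prefix and the source functions agree
on the receive events of the shorter one. -/
def IsPrefix (e₁ e₂ : Exec P M) : Prop :=
  e₁.w <+: e₂.w ∧ ∀ i, e₁.IsRecv i → e₁.src i = e₂.src i

/-- Projection of an execution onto the actions of a process. -/
def proj (e : Exec P M) [DecidableEq P] (p : P) : List (Act P M) :=
  e.w.filter (fun a => decide (a.proc = p))

/-- The MSC event `(process, index within the process)` at a position of the word. -/
def evOf (e : Exec P M) [DecidableEq P] (i : ℕ) : Option (P × ℕ) :=
  (e.act? i).map
    (fun a => (a.proc, ((e.w.take i).filter (fun b => decide (b.proc = a.proc))).length))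

/-- The position in the word of the `i`-th event of process `p`. -/
def posOf (e : Exec P M) [DecidableEq P] (ev : P × ℕ) : ℕ :=
  ((List.range e.w.length).filter
    (fun k => decide ((e.act? k).map Act.proc = some ev.1))).getD ev.2 0

end Exec

/-- Raw MSCs: a word of actions per process, and a source function on events. -/
structure MSC (P M : Type) : Type where
  w : P → List (Act P M)
  src : P × ℕ → P × ℕ

namespace MSC
variable {P M : Type}

def act? (Mm : MSC P M) (ev : P × ℕ) : Option (Act P M) := (Mm.w ev.1)[ev.2]?

def IsSend (Mm : MSC P M) (ev : P × ℕ) : Prop := ∃ p q m, Mm.act? ev = some (.snd p q m)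

def IsRecv (Mm : MSC P M) (ev : P × ℕ) : Prop := ∃ p q m, Mm.act? ev = some (.rcv p q m)

/-- Well-formedness of an MSC. -/
def WF (Mm : MSC P M) : Prop :=
  (∀ p, ∀ a ∈ Mm.w p, a.proc = p) ∧
  (∀ ev p q m, Mm.act? ev = some (.rcv p q m) → Mm.act? (Mm.src ev) = some (.snd p q m)) ∧
  (∀ ev ev', Mm.IsRecv ev → Mm.IsRecv ev' → Mm.src ev = Mm.src ev' → ev = ev')

/-- Basic happens-before steps: process order and message order. -/
inductive hbBase (Mm : MSC P M) : P × ℕ → P × ℕ → Prop where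
  | proc (p : P) (i j : ℕ) : i < j → j < (Mm.w p).length → hbBase Mm (p, i) (p, j)
  | msg (ev : P × ℕ) : Mm.IsRecv ev → hbBase Mm (Mm.src ev) ev

/-- The happens-before relation: least transitive relation containing the basic steps. -/
def hb (Mm : MSC P M) : P × ℕ → P × ℕ → Prop := Relation.TransGen (hbBase Mm)

/-- Prefix of MSCs. -/
def IsPrefix (M₁ M₂ : MSC P M) : Prop :=
  (∀ p, M₁.w p <+: M₂.w p) ∧ ∀ ev, M₁.IsRecv ev → M₁.src ev = M₂.src ev

end MSC

/-- Prefix closure of a set of MSCs. -/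
def prefSet {P M : Type} (X : Set (MSC P M)) : Set (MSC P M) :=
  {Mm | ∃ M' ∈ X, Mm.IsPrefix M'}

/-- The MSC of an execution: project onto each process and lift the source function. -/
def Exec.toMSC {P M : Type} [DecidableEq P] (e : Exec P M) : MSC P M where
  w p := e.w.filter (fun a => decide (a.proc = p))
  src ev := (e.evOf (e.src (e.posOf ev))).getD ev

/-- The linearisations of an MSC, identified with the executions they induce. -/
def lin {P M : Type} [DecidableEq P] (Mm : MSC P M) : Set (Exec P M) :=
  {e | e.WF ∧ e.toMSC = Mm}

/-- The linearisations of an MSC lying in a communication model. -/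
def linC {P M : Type} [DecidableEq P] (Com : Set (Exec P M)) (Mm : MSC P M) :
    Set (Exec P M) :=
  lin Mm ∩ Com

/-- A communication model (a set of executions) is causally closed if whenever an MSC
has a linearisation in the model, all its linearisations are in the model. -/
def CausallyClosed {P M : Type} [DecidableEq P] (Com : Set (Exec P M)) : Prop :=
  ∀ Mm : MSC P M, (linC Com Mm).Nonempty → linC Com Mm = lin Mm

/-- The MSCs linearisable in a communication model. -/
def MSCModel {P M : Type} [DecidableEq P] (Com : Set (Exec P M)) : Set (MSC P M) :=
  {Mm | (linC Com Mm).Nonempty}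

/-- The bag communication model: all executions. -/
def bag {P M : Type} : Set (Exec P M) := {e | e.WF}

/-- The synchronous communication model: every send is immediately followed by
its matching receive. -/
def synch {P M : Type} : Set (Exec P M) :=
  {e | e.WF ∧ ∀ s, e.IsSend s → e.IsRecv (s + 1) ∧ e.src (s + 1) = s}

/-- The peer-to-peer communication model. -/
def p2p {P M : Type} : Set (Exec P M) :=
  {e | e.WF ∧ ∀ s₁ s₂ p q m₁ m₂,
    e.act? s₁ = some (.snd p q m₁) → e.act? s₂ = some (.snd p q m₂) → s₁ < s₂ →
    (¬ e.Matched s₂ ∨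
      ∃ r₁ r₂, r₁ < r₂ ∧ e.IsRecv r₁ ∧ e.IsRecv r₂ ∧ e.src r₁ = s₁ ∧ e.src r₂ = s₂)}

/-- Happens-before between positions of an execution, through its MSC. -/
def Exec.hbM {P M : Type} [DecidableEq P] (e : Exec P M) (i j : ℕ) : Prop :=
  ∃ ev₁ ev₂, e.evOf i = some ev₁ ∧ e.evOf j = some ev₂ ∧ e.toMSC.hb ev₁ ev₂

/-- The causally ordered communication model. -/
def causal {P M : Type} [DecidableEq P] : Set (Exec P M) :=
  {e | e.WF ∧ ∀ s₁ s₂ p₁ p₂ q m₁ m₂,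
    e.act? s₁ = some (.snd p₁ q m₁) → e.act? s₂ = some (.snd p₂ q m₂) → e.hbM s₁ s₂ →
    (¬ e.Matched s₂ ∨
      ∃ r₁ r₂, e.hbM r₁ r₂ ∧ e.IsRecv r₁ ∧ e.IsRecv r₂ ∧ e.src r₁ = s₁ ∧ e.src r₂ = s₂)}

/-- A communicating finite state machine: an NFA with ε-transitions
(over the actions of a process) with finitely many states. -/
structure CFSM (A : Type) : Type 1 where
  State : Type
  fin : Fintype State
  aut : εNFA A State

instance {A : Type} (c : CFSM A) : Fintype c.State := c.fin

/-- The machine obtained by making all states accepting. -/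
def CFSM.up {A : Type} (c : CFSM A) : CFSM A :=
  ⟨c.State, c.fin, { c.aut with accept := Set.univ }⟩

/-- Making all states of all machines of a system accepting. -/
def sysUp {P M : Type} (S : P → CFSM (Act P M)) : P → CFSM (Act P M) :=
  fun p => (S p).up

/-- `Exec(S, Com)`: the executions of a system of CFSMs in a communication model. -/
def ExecSys {P M : Type} [DecidableEq P] (S : P → CFSM (Act P M)) (Com : Set (Exec P M)) :
    Set (Exec P M) :=
  {e | e ∈ Com ∧ ∀ p, e.proj p ∈ (S p).aut.accepts}

/-- `MSC(S, Com)`: the MSCs of the executions of a system of CFSMs. -/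
def MSCSys {P M : Type} [DecidableEq P] (S : P → CFSM (Act P M)) (Com : Set (Exec P M)) :
    Set (MSC P M) :=
  Exec.toMSC '' ExecSys S Com

/-- A system is deadlock-free for `Com` if every execution of the system with all states
accepting is a prefix of an accepting execution of the system. -/
def DeadlockFree {P M : Type} [DecidableEq P] (S : P → CFSM (Act P M))
    (Com : Set (Exec P M)) : Prop :=
  ∀ e ∈ ExecSys (sysUp S) Com, ∃ e' ∈ ExecSys S Com, e.IsPrefix e'

/-- A system is orphan-free for `Com` if all its executions are orphan-free. -/
def SysOrphanFree {P M : Type} [DecidableEq P] (S : P → CFSM (Act P M))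
    (Com : Set (Exec P M)) : Prop :=
  ∀ e ∈ ExecSys S Com, e.OrphanFree

/-- An arrow `p→q:m` with `p ≠ q`. -/
def Arrow (P M : Type) : Type := {x : P × P × M // x.1 ≠ x.2.1}

namespace Arrow
variable {P M : Type}

def sender (a : Arrow P M) : P := a.1.1
def receiver (a : Arrow P M) : P := a.1.2.1
def msg (a : Arrow P M) : M := a.1.2.2
def sendAct (a : Arrow P M) : Act P M := .snd a.sender a.receiver a.msg
def recvAct (a : Arrow P M) : Act P M := .rcv a.sender a.receiver a.msg

/-- Two arrows commute when their pairs of processes are disjoint. -/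
def Commutes (a b : Arrow P M) : Prop :=
  a.sender ≠ b.sender ∧ a.sender ≠ b.receiver ∧
    a.receiver ≠ b.sender ∧ a.receiver ≠ b.receiver

instance [DecidableEq P] [Fintype P] [Fintype M] : Fintype (Arrow P M) :=
  Subtype.fintype _

end Arrow

/-- A global type: a deterministic finite (possibly partial) automaton over arrows. -/
structure GType (P M : Type) : Type 1 where
  State : Type
  fin : Fintype State
  step : State → Arrow P M → Option State
  start : State
  accept : Set State

instance {P M : Type} (G : GType P M) : Fintype G.State := G.fin

namespace GType
variable {P M : Type}

def evalFrom (G : GType P M) (s : Option G.State) (w : List (Arrow P M)) : Option G.State :=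
  w.foldl (fun s a => s.bind (fun q => G.step q a)) s

/-- The word language of a global type. -/
def lang (G : GType P M) : Set (List (Arrow P M)) :=
  {w | ∃ s, G.evalFrom (some G.start) w = some s ∧ s ∈ G.accept}

/-- The arrows labelling the outgoing transitions of a state. -/
def choices (G : GType P M) (s : G.State) : Set (Arrow P M) := {a | (G.step s a).isSome}

/-- Commutation-determinism: no two arrows available at a same state commute. -/
def CommDet (G : GType P M) : Prop :=
  ∀ s : G.State, ∀ a ∈ G.choices s, ∀ b ∈ G.choices s, ¬ a.Commutes b

/-- Sender-driven choice: all arrows available at a same state have the same sender. -/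
def SenderDriven (G : GType P M) : Prop :=
  ∀ s : G.State, ∀ a ∈ G.choices s, ∀ b ∈ G.choices s, a.sender = b.sender

end GType

/-- The synchronous execution coded by a sequence of arrows. -/
def execOfArrows {P M : Type} (w : List (Arrow P M)) : Exec P M where
  w := (w.map (fun a => [a.sendAct, a.recvAct])).flatten
  src := fun i => i - 1

/-- The MSC coded by a sequence of arrows. -/
def mscOfArrows {P M : Type} [DecidableEq P] (w : List (Arrow P M)) : MSC P M :=
  (execOfArrows w).toMSC

/-- The set of MSCs of sequences of arrows (MSCs linearisable in the synchronous model). -/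
def MSCsynch (P M : Type) [DecidableEq P] : Set (MSC P M) :=
  Set.range (mscOfArrows (P := P) (M := M))

/-- The existential MSC language of a global type. -/
def Lexists {P M : Type} [DecidableEq P] (G : GType P M) : Set (MSC P M) :=
  mscOfArrows '' G.lang

/-- The universal MSC language of a global type. -/
def Lforall {P M : Type} [DecidableEq P] (G : GType P M) : Set (MSC P M) :=
  {Mm | (∃ w, mscOfArrows w = Mm) ∧ ∀ w, mscOfArrows w = Mm → w ∈ G.lang}

/-- A global type is commutation-closed when its existential and universal MSC
languages coincide. -/
def GType.CommClosed {P M : Type} [DecidableEq P] (G : GType P M) : Prop :=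
  Lexists G = Lforall G

/-- The relabelling of an arrow for the projection onto process `p`. -/
def projLabel {P M : Type} [DecidableEq P] (p : P) (a : Arrow P M) : Option (Act P M) :=
  if a.sender = p then some a.sendAct
  else if a.receiver = p then some a.recvAct
  else none

/-- The projected system of CFSMs of a global type. -/
def projG {P M : Type} [DecidableEq P] (G : GType P M) : P → CFSM (Act P M) :=
  fun p =>
    ⟨G.State, G.fin,
      { step := fun s oa =>
          {s' | ∃ arr : Arrow P M, G.step s arr = some s' ∧ projLabel p arr = oa},
        start := {G.start},
        accept := G.accept }⟩

/-- `Exec(G, Com)`: the semantics of a global type in a communication model. -/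
def ExecG {P M : Type} [DecidableEq P] (G : GType P M) (Com : Set (Exec P M)) :
    Set (Exec P M) :=
  {e | ∃ Mm ∈ Lexists G, e ∈ linC Com Mm}

/-- Deadlock-free realisability of a global type in a communication model:
(CC) conformance and (DF) deadlock freedom of the projected system. -/
def DFRealisable {P M : Type} [DecidableEq P] (G : GType P M) (Com : Set (Exec P M)) : Prop :=
  ExecSys (projG G) Com = ExecG G Com ∧ DeadlockFree (projG G) Com

/-- The synchronous product of a system of CFSMs: an ε-NFA over arrows. -/
def syncProd {P M : Type} (S : P → CFSM (Act P M)) :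
    εNFA (Arrow P M) (∀ p, (S p).State) where
  step st oa :=
    match oa with
    | some a =>
        {st' | st' a.sender ∈ (S a.sender).aut.step (st a.sender) (some a.sendAct) ∧
               st' a.receiver ∈ (S a.receiver).aut.step (st a.receiver) (some a.recvAct) ∧
               ∀ r, r ≠ a.sender → r ≠ a.receiver → st' r = st r}
    | none =>
        {st' | ∃ p, st' p ∈ (S p).aut.step (st p) none ∧ ∀ r, r ≠ p → st' r = st r}
  start := {st | ∀ p, st p ∈ (S p).aut.start}
  accept := {st | ∀ p, st p ∈ (S p).aut.accept}

/-- `prod(S)`: the powerset determinisation of the synchronous product, a global type. -/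
noncomputable def prodG {P M : Type} [Fintype P] (S : P → CFSM (Act P M)) : GType P M :=
  let A := (syncProd S).toNFA.toDFA
  { State := Set (∀ p, (S p).State)
    fin := by
      haveI : Finite (∀ p, (S p).State) := inferInstance
      exact Fintype.ofFinite _
    step := fun s a => some (A.step s a)
    start := A.start
    accept := A.accept }

/-- The product `G₁ ⊗ G₂` of two global types (language intersection). -/
def prodGT {P M : Type} (G₁ G₂ : GType P M) : GType P M where
  State := G₁.State × G₂.State
  fin := inferInstance
  step s a := (G₁.step s.1 a).bind fun q₁ => (G₂.step s.2 a).map fun q₂ => (q₁, q₂)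
  start := (G₁.start, G₂.start)
  accept := {s | s.1 ∈ G₁.accept ∧ s.2 ∈ G₂.accept}

/-- The dual of a global type: complete it and swap accepting and non-accepting states. -/
def dualG {P M : Type} (G : GType P M) : GType P M where
  State := Option G.State
  fin := inferInstance
  step s a := some (s.bind fun q => G.step q a)
  start := some G.start
  accept := {s | ∀ q, s = some q → q ∉ G.accept}

/-- RSC executions: every receive immediately follows its source send. -/
def RSCexec {P M : Type} : Set (Exec P M) :=
  {e | e.WF ∧ ∀ r, e.IsRecv r → e.src r = r - 1}

/-- The MSCs admitting an RSC linearisation. -/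
def MSCrsc {P M : Type} [DecidableEq P] : Set (MSC P M) :=
  {Mm | ∃ e ∈ RSCexec (P := P) (M := M), e.toMSC = Mm}

/-- A set of MSCs is RegSC if some NFA over actions accepts exactly the RSC executions
whose MSC belongs to the set. -/
def RegSCset {P M : Type} [DecidableEq P] (X : Set (MSC P M)) : Prop :=
  ∃ (σ : Type) (_ : Fintype σ) (A : NFA (Act P M) σ),
    ∀ w : List (Act P M),
      w ∈ A.accepts ↔ ∃ e ∈ RSCexec (P := P) (M := M), e.w = w ∧ e.toMSC ∈ X

/-- A communication model is RegSC if the set of its RSC-linearisable MSCs is RegSC. -/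
def RegSCmodel {P M : Type} [DecidableEq P] (Com : Set (Exec P M)) : Prop :=
  RegSCset (MSCModel Com ∩ MSCrsc)


section AuxLp
variable {P M : Type} [DecidableEq P]

def Lp (w : List (Act P M)) (p : P) : List ℕ :=
  (List.range w.length).filter (fun k => decide ((w[k]?).map Act.proc = some p))

lemma posOf_eq (e : Exec P M) (ev : P × ℕ) : e.posOf ev = (Lp e.w ev.1).getD ev.2 0 := rfl

lemma Lp_cons (a : Act P M) (w : List (Act P M)) (p : P) :
    Lp (a :: w) p = (if a.proc = p then [0] else []) ++ (Lp w p).map (· + 1) := by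
  unfold Lp
  rw [List.length_cons, List.range_succ_eq_map, List.filter_cons]
  have h1 : (fun k => decide (((a :: w)[k]?).map Act.proc = some p)) ∘ Nat.succ
      = fun k => decide ((w[k]?).map Act.proc = some p) := by
    funext k; simp
  rw [List.filter_map, h1]
  by_cases h : a.proc = p <;> simp [h]

lemma Lp_sorted (w : List (Act P M)) (p : P) : (Lp w p).Pairwise (· < ·) :=
  List.pairwise_lt_range.filter _

lemma Lp_len (w : List (Act P M)) (p : P) :
    (Lp w p).length = (w.filter (fun b => decide (b.proc = p))).length := by
  induction w with
  | nil => rfl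
  | cons a w ih =>
    rw [Lp_cons, List.filter_cons]
    by_cases h : a.proc = p <;> simp [h, ih]

lemma Lp_get (w : List (Act P M)) (p : P) :
    ∀ m k, (Lp w p)[m]? = some k →
      w[k]? = (w.filter (fun b => decide (b.proc = p)))[m]? ∧
      ((w.take k).filter (fun b => decide (b.proc = p))).length = m := by
  induction w with
  | nil => intro m k h; simp [Lp] at h
  | cons a w ih =>
    intro m k h
    rw [Lp_cons] at h
    by_cases hp : a.proc = p
    · rw [if_pos hp, List.singleton_append] at h
      match m, k with
      | 0, k =>
        rw [List.getElem?_cons_zero] at h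
        injection h with h
        subst h
        simp [List.filter_cons, hp]
      | m + 1, k =>
        rw [List.getElem?_cons_succ, List.getElem?_map] at h
        obtain ⟨k', hk', rfl⟩ := Option.map_eq_some_iff.mp h
        obtain ⟨h1, h2⟩ := ih m k' hk'
        refine ⟨?_, ?_⟩
        · simpa [List.filter_cons, hp] using h1
        · simp [List.take_succ_cons, List.filter_cons, hp, h2]
    · rw [if_neg hp, List.nil_append, List.getElem?_map] at h
      obtain ⟨k', hk', rfl⟩ := Option.map_eq_some_iff.mp h
      obtain ⟨h1, h2⟩ := ih m k' hk'
      refine ⟨?_, ?_⟩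
      · simpa [List.filter_cons, hp] using h1
      · simp [List.take_succ_cons, List.filter_cons, hp, h2]

lemma Lp_inv (w : List (Act P M)) (p : P) :
    ∀ k a, w[k]? = some a → a.proc = p →
      (Lp w p)[((w.take k).filter (fun b => decide (b.proc = p))).length]? = some k := by
  induction w with
  | nil => intro k a h; simp at h
  | cons b w ih =>
    intro k a h hp
    rw [Lp_cons]
    match k with
    | 0 =>
      simp at h; subst h
      simp [hp]
    | k + 1 =>
      rw [List.getElem?_cons_succ] at h
      have := ih k a h hp
      by_cases hb : b.proc = p
      · simp [hb, List.take_succ_cons, List.filter_cons, this]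
      · simp [hb, List.take_succ_cons, List.filter_cons, this]

lemma Lp_order_reflect (w : List (Act P M)) (p : P) {m m' k k' : ℕ}
    (h : (Lp w p)[m]? = some k) (h' : (Lp w p)[m']? = some k') (hkk : k < k') : m < m' := by
  rcases lt_trichotomy m m' with hm | hm | hm
  · exact hm
  · subst hm; rw [h] at h'; injection h' with h'; omega
  · obtain ⟨hb', hk'⟩ := List.getElem?_eq_some_iff.mp h'
    obtain ⟨hbnd, hk⟩ := List.getElem?_eq_some_iff.mp h
    have := (List.pairwise_iff_getElem.mp (Lp_sorted w p)) m' m hb' hbnd hm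
    rw [hk, hk'] at this
    omega

end AuxLp

section AuxExec
variable {P M : Type} [DecidableEq P] {e : Exec P M}

/-- Number of `p`-events strictly before position `i`. -/
def cnt (e : Exec P M) (i : ℕ) (p : P) : ℕ :=
  ((e.w.take i).filter (fun b => decide (b.proc = p))).length

lemma evOf_eq {i : ℕ} {a : Act P M} (h : e.act? i = some a) :
    e.evOf i = some (a.proc, cnt e i a.proc) := by
  unfold Exec.evOf
  rw [h]
  rfl

lemma pos_of_ev {i : ℕ} {a : Act P M} (h : e.act? i = some a) :
    e.posOf (a.proc, cnt e i a.proc) = i ∧ cnt e i a.proc < (Lp e.w a.proc).length := by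
  have hinv := Lp_inv e.w a.proc i a h rfl
  constructor
  · rw [posOf_eq, List.getD_eq_getElem?_getD]
    exact congrArg (Option.getD · 0) hinv
  · exact (List.getElem?_eq_some_iff.mp hinv).1

lemma ev_of_pos {ev : P × ℕ} (hv : ev.2 < (Lp e.w ev.1).length) :
    e.act? (e.posOf ev) = (e.w.filter (fun b => decide (b.proc = ev.1)))[ev.2]? ∧
    e.evOf (e.posOf ev) = some ev := by
  obtain ⟨k, hk⟩ : ∃ k, (Lp e.w ev.1)[ev.2]? = some k := ⟨_, List.getElem?_eq_getElem hv⟩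
  obtain ⟨h1, h2⟩ := Lp_get e.w ev.1 ev.2 k hk
  have hpos : e.posOf ev = k := by
    rw [posOf_eq, List.getD_eq_getElem?_getD, hk]; rfl
  have hlt : ev.2 < (e.w.filter (fun b => decide (b.proc = ev.1))).length := by
    rw [← Lp_len]; exact hv
  obtain ⟨b, hb⟩ : ∃ b, (e.w.filter (fun b => decide (b.proc = ev.1)))[ev.2]? = some b :=
    ⟨_, List.getElem?_eq_getElem hlt⟩
  have hbmem : b ∈ e.w.filter (fun b => decide (b.proc = ev.1)) :=
    List.mem_of_getElem? hb
  have hbp : b.proc = ev.1 := by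
    have := (List.mem_filter.mp hbmem).2
    exact of_decide_eq_true this
  have hact : e.act? k = some b := by rw [show e.act? k = e.w[k]? from rfl, h1, hb]
  constructor
  · rw [hpos]; exact hact.trans hb.symm
  · rw [hpos, evOf_eq hact, hbp]
    have h2' : cnt e k ev.1 = ev.2 := h2
    rw [h2']

lemma pos_mono {p : P} {i j : ℕ} (hij : i < j) (hj : j < (Lp e.w p).length) :
    e.posOf (p, i) < e.posOf (p, j) := by
  have hi : i < (Lp e.w p).length := lt_trans hij hj
  have h1 : e.posOf (p, i) = (Lp e.w p)[i] := by
    rw [posOf_eq, List.getD_eq_getElem?_getD, List.getElem?_eq_getElem hi]; rfl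
  have h2 : e.posOf (p, j) = (Lp e.w p)[j] := by
    rw [posOf_eq, List.getD_eq_getElem?_getD, List.getElem?_eq_getElem hj]; rfl
  rw [h1, h2]
  exact (List.pairwise_iff_getElem.mp (Lp_sorted e.w p)) i j hi hj hij

lemma hbBase_pos (he : e.WF) {ev ev' : P × ℕ} (h : e.toMSC.hbBase ev ev') :
    ev'.2 < (Lp e.w ev'.1).length ∧ e.posOf ev < e.posOf ev' := by
  cases h with
  | proc p i j hij hj =>
    have hj' : j < (Lp e.w p).length := by
      rw [Lp_len]; exact hj
    exact ⟨hj', pos_mono hij hj'⟩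
  | msg ev' hr =>
    obtain ⟨p, q, m, hev'⟩ := hr
    have hv' : ev'.2 < (Lp e.w ev'.1).length := by
      rw [Lp_len]
      exact (List.getElem?_eq_some_iff.mp hev').1
    obtain ⟨hact, hevof⟩ := ev_of_pos hv'
    have hrcv : e.act? (e.posOf ev') = some (.rcv p q m) := by rw [hact]; exact hev'
    obtain ⟨hlt, hsnd⟩ := he.1 _ p q m hrcv
    have hevsrc : e.evOf (e.src (e.posOf ev')) =
        some (p, cnt e (e.src (e.posOf ev')) p) := evOf_eq hsnd
    have hsrceq : e.toMSC.src ev' = (p, cnt e (e.src (e.posOf ev')) p) := by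
      show (e.evOf (e.src (e.posOf ev'))).getD ev' = _
      rw [hevsrc]; rfl
    obtain ⟨hps, _⟩ := pos_of_ev hsnd
    refine ⟨hv', ?_⟩
    rw [hsrceq]
    calc e.posOf (p, cnt e (e.src (e.posOf ev')) p) = e.src (e.posOf ev') := hps
      _ < e.posOf ev' := hlt

lemma hb_pos (he : e.WF) {ev ev' : P × ℕ} (h : e.toMSC.hb ev ev') :
    e.posOf ev < e.posOf ev' := by
  induction h with
  | single h => exact (hbBase_pos he h).2
  | tail _ h2 ih => exact lt_trans ih (hbBase_pos he h2).2

lemma hbM_lt (he : e.WF) {i j : ℕ} (h : e.hbM i j) : i < j := by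
  obtain ⟨ev₁, ev₂, h1, h2, hhb⟩ := h
  obtain ⟨a, ha, rfl⟩ := Option.map_eq_some_iff.mp h1
  obtain ⟨b, hbb, rfl⟩ := Option.map_eq_some_iff.mp h2
  have hp1 := (pos_of_ev (e := e) ha).1
  have hp2 := (pos_of_ev (e := e) hbb).1
  have := hb_pos he hhb
  rw [show cnt e i a.proc =
      ((e.w.take i).filter (fun b => decide (b.proc = a.proc))).length from rfl] at hp1
  rw [show cnt e j b.proc =
      ((e.w.take j).filter (fun c => decide (c.proc = b.proc))).length from rfl] at hp2
  rw [hp1, hp2] at this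
  exact this

lemma same_proc_hbM {i j : ℕ} {a b : Act P M} {p : P}
    (ha : e.act? i = some a) (hb : e.act? j = some b)
    (hap : a.proc = p) (hbp : b.proc = p) (hij : i < j) : e.hbM i j := by
  have hinvi := Lp_inv e.w p i a ha hap
  have hinvj := Lp_inv e.w p j b hb hbp
  have hci : cnt e i p = ((e.w.take i).filter (fun c => decide (c.proc = p))).length := rfl
  have hcj : cnt e j p = ((e.w.take j).filter (fun c => decide (c.proc = p))).length := rfl
  rw [← hci] at hinvi
  rw [← hcj] at hinvj
  have hlt : cnt e i p < cnt e j p := Lp_order_reflect e.w p hinvi hinvj hij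
  have hjv : cnt e j p < (Lp e.w p).length := (List.getElem?_eq_some_iff.mp hinvj).1
  have hjv' : cnt e j p < (e.toMSC.w p).length := by
    rw [show (e.toMSC.w p) = e.w.filter (fun c => decide (c.proc = p)) from rfl, ← Lp_len]
    exact hjv
  refine ⟨(p, cnt e i p), (p, cnt e j p), ?_, ?_, ?_⟩
  · rw [evOf_eq ha, hap]
  · rw [evOf_eq hb, hbp]
  · exact Relation.TransGen.single (MSC.hbBase.proc p _ _ hlt hjv')

end AuxExec

/-- an execution `e` is in `p2p` iff for any two send events `s₁, s₂` of `e`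
both labelled with a send from `p` to `q` such that `s₁ ≺_M s₂` (with `M = msc(e)`),
either `s₂` is unmatched, or there are receive events `r₁ ≺_M r₂` with
`src r₁ = s₁` and `src r₂ = s₂`. -/
theorem stmt0 (P Mg : Type) [Fintype P] [DecidableEq P] [Fintype Mg] [DecidableEq Mg]
    (e : Exec P Mg) (he : e.WF) :
    e ∈ p2p ↔
      (∀ s₁ s₂ p q m₁ m₂,
        e.act? s₁ = some (.snd p q m₁) → e.act? s₂ = some (.snd p q m₂) → e.hbM s₁ s₂ →
        (¬ e.Matched s₂ ∨
          ∃ r₁ r₂, e.hbM r₁ r₂ ∧ e.IsRecv r₁ ∧ e.IsRecv r₂ ∧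
            e.src r₁ = s₁ ∧ e.src r₂ = s₂)) := by
  constructor
  · rintro ⟨-, hcond⟩ s₁ s₂ p q m₁ m₂ h1 h2 hhb
    have hlt := hbM_lt he hhb
    rcases hcond s₁ s₂ p q m₁ m₂ h1 h2 hlt with hun | ⟨r₁, r₂, hr, hir₁, hir₂, hs₁, hs₂⟩
    · exact Or.inl hun
    · refine Or.inr ⟨r₁, r₂, ?_, hir₁, hir₂, hs₁, hs₂⟩
      obtain ⟨p₁, q₁, mm₁, ha₁⟩ := hir₁
      obtain ⟨p₂, q₂, mm₂, ha₂⟩ := hir₂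
      have hb₁ := (he.1 r₁ p₁ q₁ mm₁ ha₁).2
      have hb₂ := (he.1 r₂ p₂ q₂ mm₂ ha₂).2
      rw [hs₁, h1] at hb₁
      rw [hs₂, h2] at hb₂
      injection hb₁ with hb₁; injection hb₂ with hb₂
      cases hb₁; cases hb₂
      exact same_proc_hbM ha₁ ha₂ rfl rfl hr
  · intro hcond
    refine ⟨he, fun s₁ s₂ p q m₁ m₂ h1 h2 hlt => ?_⟩
    have hhb : e.hbM s₁ s₂ := same_proc_hbM h1 h2 rfl rfl hlt
    rcases hcond s₁ s₂ p q m₁ m₂ h1 h2 hhb with hun | ⟨r₁, r₂, hr, hir₁, hir₂, hs₁, hs₂⟩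
    · exact Or.inl hun
    · exact Or.inr ⟨r₁, r₂, hbM_lt he hr, hir₁, hir₂, hs₁, hs₂⟩
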